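/- Let μ be a Borel probability measure on the circle 𝕋 that is invariant under both T_p(z) = z^p and T_q(z) = z^q, where p, q ≥ 2. Define ν̂ : ℤ[1/(pq)] → ℂ by ν̂(k·p^{-m}·q^{-n}) = μ̂(k) for integers k, m, n ≥ 0, where μ̂(k) = ∫ z^k dμ is the k-th Fourier coefficient of μ. Then ν̂ is well-defined and is a positive definite function on the group ℤ[1/(pq)]: for every finite family (λ_s)_{s∈F} of complex numbers indexed by a finite subset F ⊆ ℤ[1/(pq)], the sum ∑_{s,t∈F} conj(λ_s) λ_t ν̂(t − s) is a nonnegative real number. -/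

import Mathlib

open MeasureTheory Complex ComplexConjugate

set_option linter.unusedSectionVars false
set_option maxHeartbeats 1000000

section stmt11aux
variable [MeasurableSpace Circle] [BorelSpace Circle] (μ : Measure Circle) [IsProbabilityMeasure μ]

lemma stmt11_circ_cont (k : ℤ) : Continuous (fun z : Circle => (z : ℂ) ^ k) :=
  (continuous_induced_dom.comp (continuous_zpow (G := Circle) k)).congr fun z => Circle.coe_zpow z k

lemma stmt11_circ_int (k : ℤ) : Integrable (fun z : Circle => (z : ℂ) ^ k) μ :=
  (stmt11_circ_cont k).integrable_of_hasCompactSupport (HasCompactSupport.of_compactSpace _)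

lemma stmt11_step (p : ℕ) (hμp : MeasurePreserving (fun z : Circle => z ^ p) μ μ) (k : ℤ) :
    ∫ z : Circle, (z : ℂ) ^ ((p : ℤ) * k) ∂μ = ∫ z : Circle, (z : ℂ) ^ k ∂μ := by
  have h1 : ∫ z : Circle, (z : ℂ) ^ k ∂μ
      = ∫ z : Circle, (z : ℂ) ^ k ∂(Measure.map (fun z : Circle => z ^ p) μ) := by
    rw [hμp.map_eq]
  rw [h1, integral_map hμp.measurable.aemeasurable
    ((stmt11_circ_cont k).aestronglyMeasurable)]
  congr 1
  ext z
  rw [← Circle.coe_zpow, ← Circle.coe_zpow, ← zpow_natCast z p, ← zpow_mul, mul_comm]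

lemma stmt11_steps (p q : ℕ)
    (hμp : MeasurePreserving (fun z : Circle => z ^ p) μ μ)
    (hμq : MeasurePreserving (fun z : Circle => z ^ q) μ μ) (m n : ℕ) (k : ℤ) :
    ∫ z : Circle, (z : ℂ) ^ ((p : ℤ) ^ m * (q : ℤ) ^ n * k) ∂μ = ∫ z : Circle, (z : ℂ) ^ k ∂μ := by
  induction m with
  | zero =>
    induction n with
    | zero => simp
    | succ n ih =>
      have := stmt11_step μ q hμq ((p:ℤ) ^ 0 * (q:ℤ) ^ n * k)
      rw [← ih, ← this]; ring_nf
  | succ m ih =>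
    have := stmt11_step μ p hμp ((p:ℤ) ^ m * (q:ℤ) ^ n * k)
    rw [← ih, ← this]; ring_nf

lemma stmt11_wd (p q : ℕ) (hp : 2 ≤ p) (hq : 2 ≤ q)
    (hμp : MeasurePreserving (fun z : Circle => z ^ p) μ μ)
    (hμq : MeasurePreserving (fun z : Circle => z ^ q) μ μ)
    {k k' : ℤ} {m n m' n' : ℕ}
    (h : (k : ℚ) / ((p : ℚ) ^ m * (q : ℚ) ^ n) = (k' : ℚ) / ((p : ℚ) ^ m' * (q : ℚ) ^ n')) :
    ∫ z : Circle, (z : ℂ) ^ k ∂μ = ∫ z : Circle, (z : ℂ) ^ k' ∂μ := by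
  have hp0 : (p : ℚ) ≠ 0 := Nat.cast_ne_zero.mpr (by omega)
  have hq0 : (q : ℚ) ≠ 0 := Nat.cast_ne_zero.mpr (by omega)
  have hd : ((p : ℚ) ^ m * (q : ℚ) ^ n) ≠ 0 := by positivity
  have hd' : ((p : ℚ) ^ m' * (q : ℚ) ^ n') ≠ 0 := by positivity
  rw [div_eq_div_iff hd hd'] at h
  have hz : k * ((p : ℤ) ^ m' * (q : ℤ) ^ n') = k' * ((p : ℤ) ^ m * (q : ℤ) ^ n) := by
    exact_mod_cast h
  calc ∫ z : Circle, (z : ℂ) ^ k ∂μ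
      = ∫ z : Circle, (z : ℂ) ^ ((p:ℤ) ^ m' * (q:ℤ) ^ n' * k) ∂μ :=
        (stmt11_steps μ p q hμp hμq m' n' k).symm
    _ = ∫ z : Circle, (z : ℂ) ^ ((p:ℤ) ^ m * (q:ℤ) ^ n * k') ∂μ := by
        rw [mul_comm _ k, hz, mul_comm]
    _ = ∫ z : Circle, (z : ℂ) ^ k' ∂μ := stmt11_steps μ p q hμp hμq m n k'

end stmt11aux

/-- for a ×p,×q-invariant Borel probability measure μ on the circle,
the assignment ν̂(k·p^{-m}·q^{-n}) = μ̂(k) is a well-defined positive definite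
function on the group ℤ[1/(pq)] ⊆ ℚ. -/
theorem stmt11 (p q : ℕ) (hp : 2 ≤ p) (hq : 2 ≤ q)
    [MeasurableSpace Circle] [BorelSpace Circle]
    (μ : Measure Circle) [IsProbabilityMeasure μ]
    (hμp : MeasurePreserving (fun z : Circle => z ^ p) μ μ)
    (hμq : MeasurePreserving (fun z : Circle => z ^ q) μ μ) :
    ∃ ν : ℚ → ℂ,
      (∀ (k : ℤ) (m n : ℕ),
        ν ((k : ℚ) / ((p : ℚ) ^ m * (q : ℚ) ^ n)) = ∫ z : Circle, (z : ℂ) ^ k ∂μ) ∧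
      ∀ F : Finset ℚ,
        (↑F : Set ℚ) ⊆ {x : ℚ | ∃ (k : ℤ) (m n : ℕ), x = (k : ℚ) / ((p : ℚ) ^ m * (q : ℚ) ^ n)} →
        ∀ lam : ℚ → ℂ,
          0 ≤ (∑ s ∈ F, ∑ t ∈ F, (starRingEnd ℂ) (lam s) * lam t * ν (t - s)).re ∧
          (∑ s ∈ F, ∑ t ∈ F, (starRingEnd ℂ) (lam s) * lam t * ν (t - s)).im = 0 := by
  classical
  set ν : ℚ → ℂ := fun x =>
    if h : ∃ kmn : ℤ × ℕ × ℕ, x = (kmn.1 : ℚ) / ((p : ℚ) ^ kmn.2.1 * (q : ℚ) ^ kmn.2.2) then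
      ∫ z : Circle, (z : ℂ) ^ h.choose.1 ∂μ
    else 0 with hνdef
  have hν : ∀ (k : ℤ) (m n : ℕ),
      ν ((k : ℚ) / ((p : ℚ) ^ m * (q : ℚ) ^ n)) = ∫ z : Circle, (z : ℂ) ^ k ∂μ := by
    intro k m n
    have hex : ∃ kmn : ℤ × ℕ × ℕ,
        (k : ℚ) / ((p : ℚ) ^ m * (q : ℚ) ^ n)
          = (kmn.1 : ℚ) / ((p : ℚ) ^ kmn.2.1 * (q : ℚ) ^ kmn.2.2) := ⟨(k, m, n), rfl⟩
    rw [hνdef]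
    simp only [dif_pos hex]
    exact stmt11_wd μ p q hp hq hμp hμq hex.choose_spec.symm
  refine ⟨ν, hν, ?_⟩
  intro F hF lam
  -- representatives
  set rep : ℚ → ℤ × ℕ × ℕ := fun x =>
    if h : ∃ kmn : ℤ × ℕ × ℕ, x = (kmn.1 : ℚ) / ((p : ℚ) ^ kmn.2.1 * (q : ℚ) ^ kmn.2.2) then
      h.choose else (0, 0, 0) with hrepdef
  have hrep : ∀ s ∈ F, s = ((rep s).1 : ℚ) / ((p : ℚ) ^ (rep s).2.1 * (q : ℚ) ^ (rep s).2.2) := by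
    intro s hs
    obtain ⟨k, m, n, h⟩ := hF hs
    have hex : ∃ kmn : ℤ × ℕ × ℕ,
        s = (kmn.1 : ℚ) / ((p : ℚ) ^ kmn.2.1 * (q : ℚ) ^ kmn.2.2) := ⟨(k, m, n), h⟩
    rw [hrepdef]
    simp only [dif_pos hex]
    exact hex.choose_spec
  set M : ℕ := F.sup fun s => (rep s).2.1 with hM
  set N : ℕ := F.sup fun s => (rep s).2.2 with hN
  set a : ℚ → ℤ := fun s =>
    (rep s).1 * (p : ℤ) ^ (M - (rep s).2.1) * (q : ℤ) ^ (N - (rep s).2.2) with ha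
  have hp0 : (p : ℚ) ≠ 0 := Nat.cast_ne_zero.mpr (by omega)
  have hq0 : (q : ℚ) ≠ 0 := Nat.cast_ne_zero.mpr (by omega)
  have key1 : ∀ s ∈ F, s = (a s : ℚ) / ((p : ℚ) ^ M * (q : ℚ) ^ N) := by
    intro s hs
    have hm : (rep s).2.1 ≤ M := Finset.le_sup (f := fun s => (rep s).2.1) hs
    have hn : (rep s).2.2 ≤ N := Finset.le_sup (f := fun s => (rep s).2.2) hs
    have e1 : (p : ℚ) ^ (M - (rep s).2.1) * (p : ℚ) ^ (rep s).2.1 = (p : ℚ) ^ M := by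
      rw [← pow_add, Nat.sub_add_cancel hm]
    have e2 : (q : ℚ) ^ (N - (rep s).2.2) * (q : ℚ) ^ (rep s).2.2 = (q : ℚ) ^ N := by
      rw [← pow_add, Nat.sub_add_cancel hn]
    have hd : ((p : ℚ) ^ (rep s).2.1 * (q : ℚ) ^ (rep s).2.2) ≠ 0 := by positivity
    have hD : ((p : ℚ) ^ M * (q : ℚ) ^ N) ≠ 0 := by positivity
    have hcast : ((a s : ℤ) : ℚ)
        = ((rep s).1 : ℚ) * (p : ℚ) ^ (M - (rep s).2.1) * (q : ℚ) ^ (N - (rep s).2.2) := by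
      simp only [ha]
      push_cast
      ring
    calc s = ((rep s).1 : ℚ) / ((p : ℚ) ^ (rep s).2.1 * (q : ℚ) ^ (rep s).2.2) := hrep s hs
      _ = (a s : ℚ) / ((p : ℚ) ^ M * (q : ℚ) ^ N) := by
          rw [hcast, div_eq_div_iff hd hD, ← e1, ← e2]
          ring
  have key2 : ∀ s ∈ F, ∀ t ∈ F, ν (t - s) = ∫ z : Circle, (z : ℂ) ^ (a t - a s) ∂μ := by
    intro s hs t ht
    have : t - s = ((a t - a s : ℤ) : ℚ) / ((p : ℚ) ^ M * (q : ℚ) ^ N) := by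
      conv_lhs => rw [key1 t ht, key1 s hs]
      push_cast
      ring
    rw [this, hν]
  set g : Circle → ℂ := fun z => ∑ t ∈ F, lam t * (z : ℂ) ^ (a t) with hg
  have hpt : ∀ z : Circle,
      ∑ s ∈ F, ∑ t ∈ F, conj (lam s) * lam t * (z : ℂ) ^ (a t - a s)
        = ((normSq (g z) : ℝ) : ℂ) := by
    intro z
    have hz0 : (z : ℂ) ≠ 0 := Circle.coe_ne_zero z
    have hzc : conj (z : ℂ) = (z : ℂ)⁻¹ := by
      rw [← Circle.coe_inv_eq_conj, Circle.coe_inv]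
    rw [Complex.normSq_eq_conj_mul_self, hg]
    simp only [map_sum, Finset.sum_mul_sum, map_mul]
    refine Finset.sum_congr rfl fun s _ => Finset.sum_congr rfl fun t _ => ?_
    rw [zpow_sub₀ hz0, map_zpow₀, hzc, inv_zpow]
    ring
  have main : ∑ s ∈ F, ∑ t ∈ F, conj (lam s) * lam t * ν (t - s)
      = ((∫ z : Circle, normSq (g z) ∂μ : ℝ) : ℂ) := by
    have hint : ∀ s t : ℚ,
        Integrable (fun z : Circle => conj (lam s) * lam t * (z : ℂ) ^ (a t - a s)) μ :=
      fun s t => (stmt11_circ_int μ _).const_mul _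
    calc ∑ s ∈ F, ∑ t ∈ F, conj (lam s) * lam t * ν (t - s)
        = ∑ s ∈ F, ∑ t ∈ F, ∫ z : Circle, conj (lam s) * lam t * (z : ℂ) ^ (a t - a s) ∂μ := by
          refine Finset.sum_congr rfl fun s hs => Finset.sum_congr rfl fun t ht => ?_
          rw [key2 s hs t ht, ← integral_const_mul]
      _ = ∫ z : Circle, ∑ s ∈ F, ∑ t ∈ F, conj (lam s) * lam t * (z : ℂ) ^ (a t - a s) ∂μ := by
          rw [integral_finset_sum _ fun s _ => integrable_finset_sum _ fun t _ => hint s t]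
          exact Finset.sum_congr rfl fun s _ =>
            (integral_finset_sum _ fun t _ => hint s t).symm
      _ = ∫ z : Circle, ((normSq (g z) : ℝ) : ℂ) ∂μ := by
          exact integral_congr_ae (Filter.Eventually.of_forall hpt)
      _ = ((∫ z : Circle, normSq (g z) ∂μ : ℝ) : ℂ) := integral_ofReal
  rw [main]
  constructor
  · rw [Complex.ofReal_re]
    exact integral_nonneg fun z => normSq_nonneg _
  · exact Complex.ofReal_im _
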